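/- Let λ be a regular uncountable cardinal, S ⊆ {δ < λ⁺ : cf(δ) = λ}, C̄ = ⟨C_δ : δ ∈ S⟩ a sequence where each C_δ is a club of δ of order type λ, and h̄ = ⟨h_δ : δ ∈ S⟩ with h_δ : C_δ → λ. Then the forcing notion Q²_{C̄,h̄} is (<λ)-complete: every ≤-increasing sequence of conditions of length < λ has an upper bound in Q²_{C̄,h̄}. -/

import Mathlib

/-- `C` is a club of the limit ordinal `δ`: a subset of `δ`, unbounded in `δ`,
closed below `δ`. -/
def IsClubBelow (C : Set Ordinal.{0}) (δ : Ordinal.{0}) : Prop :=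
  (∀ α ∈ C, α < δ) ∧ (∀ α < δ, ∃ β ∈ C, α ≤ β) ∧
    ∀ B ⊆ C, B.Nonempty → sSup B < δ → sSup B ∈ C

/-- The order type of a set of ordinals. -/
noncomputable def otype (C : Set Ordinal.{0}) : Ordinal.{1} :=
  Ordinal.type (Subrel ((· < ·) : Ordinal.{0} → Ordinal.{0} → Prop) (· ∈ C))

/-- Conditions of the forcing notion `Q²_{C̄,h̄}`: pairs `(α, f)` with `α < λ⁺`
representing a function `f : α → λ` such that for every `δ ∈ S` with `δ ≤ α` there is
`γ < δ` with `f β = h δ β` for all `β ∈ C_δ ∖ γ`. -/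
def Q2Cond (lam : Cardinal.{0}) (S : Set Ordinal.{0}) (C : Ordinal.{0} → Set Ordinal.{0})
    (h : Ordinal.{0} → Ordinal.{0} → Ordinal.{0})
    (α : Ordinal.{0}) (f : Ordinal.{0} → Ordinal.{0}) : Prop :=
  α < (Order.succ lam).ord ∧ (∀ β < α, f β < lam.ord) ∧
    ∀ δ ∈ S, δ ≤ α → ∃ γ < δ, ∀ β ∈ C δ, γ ≤ β → f β = h δ β

/-- The order of `Q²_{C̄,h̄}` is extension of functions. -/
def Q2Le (α₀ : Ordinal.{0}) (f₀ : Ordinal.{0} → Ordinal.{0})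
    (α₁ : Ordinal.{0}) (f₁ : Ordinal.{0} → Ordinal.{0}) : Prop :=
  α₀ ≤ α₁ ∧ ∀ β < α₀, f₁ β = f₀ β

/-- For `λ` regular uncountable, `S ⊆ {δ < λ⁺ : cf δ = λ}`, clubs `C_δ` of `δ` of order
type `λ` and colourings `h_δ : C_δ → λ`, the forcing notion `Q²_{C̄,h̄}` is
`(<λ)`-complete: every `≤`-increasing sequence of conditions of length `< λ` has an upper
bound in `Q²_{C̄,h̄}`. -/
theorem stmt11 (lam : Cardinal.{0}) (hreg : lam.IsRegular) (hunc : Cardinal.aleph0 < lam)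
    (S : Set Ordinal.{0}) (hS : ∀ δ ∈ S, δ < (Order.succ lam).ord ∧ δ.cof = lam)
    (C : Ordinal.{0} → Set Ordinal.{0})
    (hC : ∀ δ ∈ S, IsClubBelow (C δ) δ ∧ otype (C δ) = Ordinal.lift.{1} lam.ord)
    (h : Ordinal.{0} → Ordinal.{0} → Ordinal.{0})
    (hh : ∀ δ ∈ S, ∀ β ∈ C δ, h δ β < lam.ord)
    (δ₀ : Ordinal.{0}) (hδ₀ : δ₀ < lam.ord)
    (α : Ordinal.{0} → Ordinal.{0}) (f : Ordinal.{0} → Ordinal.{0} → Ordinal.{0})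
    (hcond : ∀ i < δ₀, Q2Cond lam S C h (α i) (f i))
    (hmono : ∀ i j : Ordinal.{0}, i ≤ j → j < δ₀ → Q2Le (α i) (f i) (α j) (f j)) :
    ∃ (α' : Ordinal.{0}) (f' : Ordinal.{0} → Ordinal.{0}),
      Q2Cond lam S C h α' f' ∧ ∀ i < δ₀, Q2Le (α i) (f i) α' f' := by
  classical
  set α' : Ordinal := Ordinal.bsup δ₀ (fun i _ => α i) with hα'def
  -- agreement
  have hagree : ∀ β i j, i < δ₀ → j < δ₀ → β < α i → β < α j → f i β = f j β := by
    intro β i j hi hj hβi hβj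
    rcases le_total i j with hij | hij
    · exact ((hmono i j hij hj).2 β hβi).symm
    · exact (hmono j i hij hi).2 β hβj
  set f' : Ordinal → Ordinal := fun β =>
    if hb : ∃ i, ∃ _ : i < δ₀, β < α i then f hb.choose β else 0 with hf'def
  have hf'eq : ∀ β i, i < δ₀ → β < α i → f' β = f i β := by
    intro β i hi hβ
    have hb : ∃ j, ∃ _ : j < δ₀, β < α j := ⟨i, hi, hβ⟩
    simp only [hf'def, dif_pos hb]
    exact hagree β hb.choose i hb.choose_spec.1 hi hb.choose_spec.2 hβ
  have hcard : δ₀.card < lam := Cardinal.lt_ord.mp hδ₀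
  have hle : ∀ i (hi : i < δ₀), α i ≤ α' := fun i hi => Ordinal.le_bsup _ i hi
  have hltsup : ∀ β, β < α' → ∃ i, ∃ _ : i < δ₀, β < α i := by
    intro β hβ
    obtain ⟨i, hi, hβ⟩ := (Ordinal.lt_bsup _).mp hβ
    exact ⟨i, hi, hβ⟩
  refine ⟨α', f', ⟨?_, ?_, ?_⟩, ?_⟩
  · -- α' < (succ lam).ord
    have hreg' : (Order.succ lam).IsRegular := Cardinal.isRegular_succ hreg.aleph0_le
    refine Ordinal.bsup_lt_ord ?_ (fun i hi => (hcond i hi).1)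
    rw [hreg'.cof_eq]
    exact hcard.trans (Order.lt_succ lam)
  · intro β hβ
    obtain ⟨i, hi, hβ⟩ := hltsup β hβ
    rw [hf'eq β i hi hβ]
    exact (hcond i hi).2.1 β hβ
  · intro δ hδ hδα
    by_cases hex : ∃ i, ∃ _ : i < δ₀, δ ≤ α i
    · obtain ⟨i, hi, hδi⟩ := hex
      obtain ⟨γ, hγ, hγeq⟩ := (hcond i hi).2.2 δ hδ hδi
      refine ⟨γ, hγ, fun β hβC hγβ => ?_⟩
      have hβδ : β < δ := (hC δ hδ).1.1 β hβC
      rw [hf'eq β i hi (hβδ.trans_le hδi)]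
      exact hγeq β hβC hγβ
    · exfalso
      push_neg at hex
      have : α' < δ := by
        refine Ordinal.bsup_lt_ord ?_ (fun i hi => hex i hi)
        rw [(hS δ hδ).2]
        exact hcard
      exact absurd hδα this.not_ge
  · intro i hi
    refine ⟨hle i hi, fun β hβ => hf'eq β i hi hβ⟩
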